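/- arXiv:2306.02730 — 4 statements merged into one kernel-verified Lean document; each statement's English description precedes it below -/
import Mathlib

section
/- Let v_i ≠ v_j be two tasks in a canonical task graph containing no buffer nodes, and suppose there is a node v' reachable from v_i by a directed path and reachable from v_j by a directed path. Assume every node v on these paths has a positive rational production rate R(v), positive data volumes with Cout(v) = R(v)·Cin(v), and positive real streaming intervals with SIout(v) = SIin(v)/R(v); that along each edge of the paths Cout of the source equals Cin of the target and SIin of the target equals SIout of the source; and that the common endpoint v' has a single well-defined input streaming interval SIin(v') equal to the streaming interval delivered along both paths. Then SIout(v_i) · Cout(v_i) = SIout(v_j) · Cout(v_j). -/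
/-- Lemma 2 of the paper.
Let `vi ≠ vj` be two tasks in a canonical task graph with no buffer nodes, and
suppose a node `v'` is reachable from `vi` via a directed path `f 0, …, f m`
and from `vj` via a directed path `g 0, …, g k`. Every node on these paths has
a positive rational production rate `R v`, positive data volumes with
`Cout v = R v * Cin v`, and positive real streaming intervals with
`SIout v = SIin v / R v`; along each edge of the paths the output volume of
the source equals the input volume of the target and the input streaming
interval of the target equals the output streaming interval of the source
(in particular `v'` has a single well-defined input streaming interval,
delivered along both paths). Then
`SIout vi * Cout vi = SIout vj * Cout vj`. -/
theorem streaming_interval_volume_product_eq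
    {α : Type*} (vi vj v' : α) (hne : vi ≠ vj)
    (m k : ℕ) (f g : ℕ → α)
    (hf0 : f 0 = vi) (hfm : f m = v')
    (hg0 : g 0 = vj) (hgk : g k = v')
    (R Cin Cout : α → ℚ) (SIin SIout : α → ℝ)
    (hnode : ∀ v : α, ((∃ t ≤ m, f t = v) ∨ (∃ t ≤ k, g t = v)) →
      0 < R v ∧ 0 < Cin v ∧ 0 < Cout v ∧ 0 < SIin v ∧ 0 < SIout v ∧
      Cout v = R v * Cin v ∧ SIout v = SIin v / (R v : ℝ))
    (hedgeF : ∀ t < m, Cout (f t) = Cin (f (t + 1)) ∧ SIin (f (t + 1)) = SIout (f t))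
    (hedgeG : ∀ t < k, Cout (g t) = Cin (g (t + 1)) ∧ SIin (g (t + 1)) = SIout (g t)) :
    SIout vi * (Cout vi : ℝ) = SIout vj * (Cout vj : ℝ) := by
  -- product SIout * Cout equals SIin * Cin at any node satisfying the node conditions
  have node_prod : ∀ v : α, ((∃ t ≤ m, f t = v) ∨ (∃ t ≤ k, g t = v)) →
      SIout v * (Cout v : ℝ) = SIin v * (Cin v : ℝ) := by
    intro v hv
    obtain ⟨hR, _, _, _, _, hC, hSI⟩ := hnode v hv
    have hR' : (R v : ℝ) ≠ 0 := by positivity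
    rw [hSI, hC]
    push_cast
    field_simp
  -- invariance of the product along a path
  have main : ∀ (n : ℕ) (h : ℕ → α),
      (∀ t ≤ n, (∃ t' ≤ m, f t' = h t) ∨ (∃ t' ≤ k, g t' = h t)) →
      (∀ t < n, Cout (h t) = Cin (h (t + 1)) ∧ SIin (h (t + 1)) = SIout (h t)) →
      SIout (h 0) * (Cout (h 0) : ℝ) = SIout (h n) * (Cout (h n) : ℝ) := by
    intro n
    induction n with
    | zero => intro h _ _; rfl
    | succ n ih =>
      intro h hmem hedge
      have h1 := ih h (fun t ht => hmem t (le_trans ht (Nat.le_succ n)))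
        (fun t ht => hedge t (Nat.lt_succ_of_lt ht))
      obtain ⟨hC, hSI⟩ := hedge n (Nat.lt_succ_self n)
      have h2 := node_prod (h (n + 1)) (hmem (n + 1) le_rfl)
      rw [h1, h2, hSI, ← hC]
  have hfi := main m f (fun t ht => Or.inl ⟨t, ht, rfl⟩) hedgeF
  have hgi := main k g (fun t ht => Or.inr ⟨t, ht, rfl⟩) hedgeG
  rw [hf0, hfm] at hfi
  rw [hg0, hgk] at hgi
  rw [hfi, hgi]
end

section
/- Let n, p, k ≥ 1 be natural numbers, let m = ⌈n/p⌉, and let ℓ : Fin n → ℕ be a nondecreasing sequence of positive integers (the levels of n tasks sorted in level order). Partition the indices {0, ..., n−1} into m consecutive blocks B_1, ..., B_m where block B_i consists of indices (i−1)·p through min(i·p, n) − 1 (so each block has at most p elements). For each block B_i let λ_i denote the number of distinct values of ℓ occurring in B_i, and let L = max_i ℓ_i denote the largest level, where additionally ℓ attains every value in {1, ..., L} (levels are consecutive). Then, as rational numbers, Σ_{i=1}^{m} (k + λ_i − 1) ≤ k·n/p + k + L − 1. -/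
/-- quantitative core of the Brent-type upper bound for
element-wise task graphs. Let `n, p, k ≥ 1`, `m = ⌈n/p⌉`, and let `ℓ` be a
nondecreasing sequence of positive integers on `{0, …, n−1}` (the levels of
`n` tasks in level order). The `i`-th block (for `0 ≤ i < m`) consists of
indices `i·p, …, min((i+1)·p, n) − 1` (at most `p` elements). Let `λ_i` be
the number of distinct values of `ℓ` in block `i`, and let `L = max ℓ`,
where `ℓ` attains every value in `{1, …, L}`. Then, in `ℚ`,
`Σ_{i} (k + λ_i − 1) ≤ k·n/p + k + L − 1`. -/
theorem elementwise_schedule_time_bound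
    (n p k : ℕ) (hn : 1 ≤ n) (hp : 1 ≤ p) (hk : 1 ≤ k)
    (m : ℕ) (hm : m = (n + p - 1) / p)
    (ℓ : ℕ → ℕ)
    (hpos : ∀ j < n, 1 ≤ ℓ j)
    (hmono : ∀ i j, i ≤ j → j < n → ℓ i ≤ ℓ j)
    (L : ℕ) (hL : L = (Finset.range n).sup ℓ)
    (hconsec : ∀ v, 1 ≤ v → v ≤ L → ∃ j < n, ℓ j = v) :
    ∑ i ∈ Finset.range m,
        ((k : ℚ) + ((Finset.Ico (i * p) (min ((i + 1) * p) n)).image ℓ).card - 1)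
      ≤ (k : ℚ) * n / p + k + L - 1 := by
  have hp0 : 0 < p := hp
  have hm1 : 1 ≤ m := by
    subst hm
    exact (Nat.one_le_div_iff hp0).mpr (by omega)
  -- every block with index < m starts inside the range
  have hblock : ∀ i, i < m → i * p < n := by
    intro i hi
    have h1 : i + 1 ≤ (n + p - 1) / p := by omega
    have h2 : (i + 1) * p ≤ n + p - 1 := (Nat.le_div_iff_mul_le hp0).mp h1
    have h3 : i * p + p = (i + 1) * p := by ring
    omega
  set g : ℕ → ℚ := fun i => if i < m then (ℓ (i * p) : ℚ) else (L : ℚ) with hg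
  have key : ∀ i ∈ Finset.range m,
      (((Finset.Ico (i * p) (min ((i + 1) * p) n)).image ℓ).card : ℚ)
        ≤ g (i + 1) - g i + 1 := by
    intro i hi
    rw [Finset.mem_range] at hi
    have hs : i * p < n := hblock i hi
    have hip : i * p < (i + 1) * p := by nlinarith
    have hslt : i * p < min ((i + 1) * p) n := lt_min hip hs
    set t := min ((i + 1) * p) n with ht
    have htn : t ≤ n := min_le_right _ _
    have he : t - 1 < n := by omega
    have hse : i * p ≤ t - 1 := by omega
    have hle : ℓ (i * p) ≤ ℓ (t - 1) := hmono _ _ hse he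
    have hcard : ((Finset.Ico (i * p) t).image ℓ).card ≤ ℓ (t - 1) - ℓ (i * p) + 1 := by
      have hsub : (Finset.Ico (i * p) t).image ℓ ⊆ Finset.Icc (ℓ (i * p)) (ℓ (t - 1)) := by
        intro v hv
        simp only [Finset.mem_image, Finset.mem_Ico] at hv
        obtain ⟨j, ⟨hj1, hj2⟩, rfl⟩ := hv
        have hjn : j < n := lt_of_lt_of_le hj2 htn
        exact Finset.mem_Icc.mpr ⟨hmono _ _ hj1 hjn, hmono _ _ (by omega) he⟩
      calc ((Finset.Ico (i * p) t).image ℓ).card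
          ≤ (Finset.Icc (ℓ (i * p)) (ℓ (t - 1))).card := Finset.card_le_card hsub
        _ = ℓ (t - 1) + 1 - ℓ (i * p) := Nat.card_Icc _ _
        _ ≤ ℓ (t - 1) - ℓ (i * p) + 1 := by omega
    have hgi : g i = (ℓ (i * p) : ℚ) := by simp [hg, hi]
    have hgi1 : (ℓ (t - 1) : ℚ) ≤ g (i + 1) := by
      by_cases h : i + 1 < m
      · have hn1 : (i + 1) * p < n := hblock _ h
        have hmle : ℓ (t - 1) ≤ ℓ ((i + 1) * p) := hmono _ _ (by omega) hn1
        simp only [hg, if_pos h]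
        exact_mod_cast hmle
      · have hLle : ℓ (t - 1) ≤ L := by
          rw [hL]; exact Finset.le_sup (Finset.mem_range.mpr he)
        simp only [hg, if_neg h]
        exact_mod_cast hLle
    calc (((Finset.Ico (i * p) t).image ℓ).card : ℚ)
        ≤ ((ℓ (t - 1) - ℓ (i * p) + 1 : ℕ) : ℚ) := by exact_mod_cast hcard
      _ = (ℓ (t - 1) : ℚ) - (ℓ (i * p) : ℚ) + 1 := by
          rw [Nat.cast_add, Nat.cast_sub hle, Nat.cast_one]
      _ ≤ g (i + 1) - g i + 1 := by rw [hgi]; linarith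
  -- sum the per-block bounds
  have step : ∑ i ∈ Finset.range m,
      ((k : ℚ) + ((Finset.Ico (i * p) (min ((i + 1) * p) n)).image ℓ).card - 1)
      ≤ ∑ i ∈ Finset.range m, ((g (i + 1) - g i) + (k : ℚ)) := by
    apply Finset.sum_le_sum
    intro i hi
    have := key i hi
    linarith
  have eval : ∑ i ∈ Finset.range m, ((g (i + 1) - g i) + (k : ℚ))
      = (g m - g 0) + m * k := by
    rw [Finset.sum_add_distrib, Finset.sum_range_sub g, Finset.sum_const,
      Finset.card_range, nsmul_eq_mul]
  have hg0 : g 0 = (ℓ 0 : ℚ) := by simp [hg, hm1, Nat.lt_of_lt_of_le Nat.zero_lt_one hm1]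
  have hgm : g m = (L : ℚ) := by simp [hg]
  have hℓ0 : (1 : ℚ) ≤ (ℓ 0 : ℚ) := by exact_mod_cast hpos 0 hn
  -- arithmetic: m*k ≤ k*n/p + k
  have hmp : m * p ≤ n + p - 1 := by
    rw [hm]; exact Nat.div_mul_le_self _ _
  have hp0' : (0 : ℚ) < p := by exact_mod_cast hp0
  have hk0' : (0 : ℚ) ≤ k := by positivity
  have hmq : ((m : ℚ) - 1) ≤ (n : ℚ) / p := by
    rw [le_div_iff₀ hp0']
    have : (m : ℚ) * p ≤ (n : ℚ) + p - 1 := by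
      have := hmp
      have hcast : ((m * p : ℕ) : ℚ) ≤ ((n + p - 1 : ℕ) : ℚ) := by exact_mod_cast this
      push_cast at hcast
      rw [Nat.cast_sub (by omega)] at *
      · push_cast at *; linarith [hcast]
    nlinarith
  have hfin : (m : ℚ) * k ≤ (k : ℚ) * n / p + k := by
    have h1 : ((m : ℚ) - 1) * k ≤ ((n : ℚ) / p) * k :=
      mul_le_mul_of_nonneg_right hmq hk0'
    have h2 : ((n : ℚ) / p) * k = (k : ℚ) * n / p := by ring
    linarith
  calc ∑ i ∈ Finset.range m,
      ((k : ℚ) + ((Finset.Ico (i * p) (min ((i + 1) * p) n)).image ℓ).card - 1)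
      ≤ (g m - g 0) + m * k := le_trans step (le_of_eq eval)
    _ = ((L : ℚ) - (ℓ 0 : ℚ)) + m * k := by rw [hg0, hgm]
    _ ≤ (k : ℚ) * n / p + k + L - 1 := by linarith
end

section
/- Let w : Fin n → ℝ be a nonincreasing sequence of nonnegative reals (w_0 ≥ w_1 ≥ ... ≥ w_{n−1} ≥ 0) and let p ≥ 1 be a natural number with p ≤ n. Partition the indices into consecutive blocks of size p (the last block possibly smaller): block B_i (for i = 1, ..., ⌈n/p⌉) consists of indices (i−1)·p through min(i·p, n) − 1. Then the sum over all blocks except the first of the maximum of w on the block satisfies Σ_{i=2}^{⌈n/p⌉} max_{j ∈ B_i} w_j ≤ (Σ_{j=0}^{n−1} w_j) / p. -/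
lemma sum_blocks_aux (f : ℕ → ℝ) (p K : ℕ) :
    ∑ k ∈ Finset.range K, ∑ j ∈ Finset.Ico (k * p) ((k + 1) * p), f j
      = ∑ j ∈ Finset.range (K * p), f j := by
  induction K with
  | zero => simp
  | succ K ih =>
    rw [Finset.sum_range_succ, ih, Finset.range_eq_Ico,
      Finset.sum_Ico_consecutive _ (Nat.zero_le _)
        (Nat.mul_le_mul_right _ (Nat.le_succ _)), Nat.succ_eq_add_one, Finset.range_eq_Ico]

/-- work lower-bound lemma for downsampler graphs.
Let `w 0 ≥ w 1 ≥ ⋯ ≥ w (n−1) ≥ 0` be a nonincreasing sequence of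
nonnegative reals and let `1 ≤ p ≤ n`. Partition the indices into
consecutive blocks of size `p` (the last possibly smaller): block `i`
(`0 ≤ i < m`, `m = ⌈n/p⌉`) consists of indices `i·p, …, min((i+1)·p, n) − 1`.
Then the sum over all blocks except the first of the maximum of `w` on the
block (expressed as `sSup` of the image, a finite nonempty set of reals)
is at most `(Σ_j w j) / p`. -/
theorem sum_block_max_le_work_div
    (n p : ℕ) (hp : 1 ≤ p) (hpn : p ≤ n)
    (m : ℕ) (hm : m = (n + p - 1) / p)
    (w : ℕ → ℝ)
    (hnonneg : ∀ j < n, 0 ≤ w j)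
    (hmono : ∀ i j, i ≤ j → j < n → w j ≤ w i) :
    ∑ i ∈ Finset.Ico 1 m, sSup (w '' Set.Ico (i * p) (min ((i + 1) * p) n))
      ≤ (∑ j ∈ Finset.range n, w j) / p := by
  have hppos : (0 : ℝ) < p := by exact_mod_cast hp
  have hmp : m * p ≤ n + p - 1 := by rw [hm]; exact Nat.div_mul_le_self _ _
  have hin : ∀ i < m, i * p < n := by
    intro i hi
    have h2 : (i + 1) * p ≤ m * p := Nat.mul_le_mul_right p hi
    rw [add_mul, one_mul] at h2
    omega
  have hm1 : 1 ≤ m := by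
    rw [hm, Nat.one_le_div_iff (by omega)]
    omega
  have hsup : ∀ i ∈ Finset.Ico 1 m,
      sSup (w '' Set.Ico (i * p) (min ((i + 1) * p) n)) = w (i * p) := by
    intro i hi
    obtain ⟨hi1, hi2⟩ := Finset.mem_Ico.mp hi
    have hlt : i * p < n := hin i hi2
    have hlt2 : i * p < (i + 1) * p := by rw [add_mul, one_mul]; omega
    have hmem : i * p ∈ Set.Ico (i * p) (min ((i + 1) * p) n) :=
      ⟨le_refl _, lt_min hlt2 hlt⟩
    have hub : w (i * p) ∈ upperBounds (w '' Set.Ico (i * p) (min ((i + 1) * p) n)) := by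
      rintro x ⟨j, hj, rfl⟩
      exact hmono (i * p) j hj.1 (lt_of_lt_of_le hj.2 (min_le_right _ _))
    exact le_antisymm (csSup_le ⟨_, Set.mem_image_of_mem w hmem⟩ hub)
      (le_csSup ⟨_, hub⟩ (Set.mem_image_of_mem w hmem))
  rw [Finset.sum_congr rfl hsup, le_div_iff₀ hppos]
  calc (∑ i ∈ Finset.Ico 1 m, w (i * p)) * p
      = ∑ i ∈ Finset.Ico 1 m, (p : ℝ) * w (i * p) := by
        rw [Finset.sum_mul]; exact Finset.sum_congr rfl fun i _ => mul_comm _ _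
    _ ≤ ∑ i ∈ Finset.Ico 1 m, ∑ j ∈ Finset.Ico ((i - 1) * p) (i * p), w j := by
        apply Finset.sum_le_sum
        intro i hi
        obtain ⟨hi1, hi2⟩ := Finset.mem_Ico.mp hi
        have hlt : i * p < n := hin i hi2
        have hcard : (Finset.Ico ((i - 1) * p) (i * p)).card = p := by
          rw [Nat.card_Ico, Nat.sub_one_mul]
          have hle : p ≤ i * p := Nat.le_mul_of_pos_left p (by omega)
          omega
        have := Finset.card_nsmul_le_sum (Finset.Ico ((i - 1) * p) (i * p))
          w (w (i * p)) (fun j hj => by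
            obtain ⟨_, hj2⟩ := Finset.mem_Ico.mp hj
            exact hmono j (i * p) (le_of_lt hj2) hlt)
        rwa [hcard, nsmul_eq_mul] at this
    _ = ∑ j ∈ Finset.range ((m - 1) * p), w j := by
        rw [Finset.sum_Ico_eq_sum_range]
        rw [← sum_blocks_aux w p (m - 1)]
        apply Finset.sum_congr rfl
        intro k _
        have h1 : 1 + k - 1 = k := by omega
        have h2 : 1 + k = k + 1 := by omega
        rw [h1, h2]
    _ ≤ ∑ j ∈ Finset.range n, w j := by
        apply Finset.sum_le_sum_of_subset_of_nonneg
        · apply Finset.range_subset_range.mpr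
          exact le_of_lt (hin (m - 1) (by omega))
        · intro j hj _
          exact hnonneg j (Finset.mem_range.mp hj)
end

section
/- Let n ≥ 1 and p ≥ 1 be natural numbers, m = ⌈n/p⌉, and let w : Fin n → ℝ be a nonincreasing sequence of nonnegative reals partitioned into m consecutive blocks B_1, ..., B_m where block B_i consists of indices (i−1)·p through min(i·p, n) − 1. Let λ_1, ..., λ_m be positive integers with Σ_{i=1}^{m} (λ_i − 1) ≤ D for some natural number D. Then Σ_{i=1}^{m} ( max_{j ∈ B_i} w_j + λ_i − 1 ) ≤ D + w_0 + (Σ_{j=0}^{n−1} w_j) / p. -/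
/-- quantitative core of the scheduling theorem for graphs
of element-wise and downsampler nodes. Let `n, p ≥ 1`, `m = ⌈n/p⌉`, and let
`w 0 ≥ w 1 ≥ ⋯ ≥ w (n−1) ≥ 0` be a nonincreasing sequence of nonnegative
reals partitioned into `m` consecutive blocks, block `i` (`0 ≤ i < m`)
consisting of indices `i·p, …, min((i+1)·p, n) − 1`. Let `λ_0, …, λ_{m−1}`
be positive integers with `Σ_i (λ_i − 1) ≤ D`. Then
`Σ_i (max_{j ∈ B_i} w j + λ_i − 1) ≤ D + w 0 + (Σ_j w j) / p`
(the block maximum expressed as `sSup` of the image, a finite nonempty set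
of reals). -/
theorem downsampler_schedule_time_bound
    (n p : ℕ) (hn : 1 ≤ n) (hp : 1 ≤ p)
    (m : ℕ) (hm : m = (n + p - 1) / p)
    (w : ℕ → ℝ)
    (hnonneg : ∀ j < n, 0 ≤ w j)
    (hmono : ∀ i j, i ≤ j → j < n → w j ≤ w i)
    (lam : ℕ → ℕ) (hlam : ∀ i < m, 1 ≤ lam i)
    (D : ℕ) (hD : ∑ i ∈ Finset.range m, (lam i - 1) ≤ D) :
    ∑ i ∈ Finset.range m,
        (sSup (w '' Set.Ico (i * p) (min ((i + 1) * p) n)) + (lam i : ℝ) - 1)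
      ≤ (D : ℝ) + w 0 + (∑ j ∈ Finset.range n, w j) / p := by
  have hp0 : 0 < p := hp
  have hblock : ∀ i < m, i * p < n := by
    intro i hi
    rw [hm] at hi
    have h2 : (i + 1) * p ≤ n + p - 1 := (Nat.le_div_iff_mul_le hp0).mp hi
    have h3 : (i + 1) * p = i * p + p := by ring
    omega
  have hsup : ∀ i < m,
      sSup (w '' Set.Ico (i * p) (min ((i + 1) * p) n)) = w (i * p) := by
    intro i hi
    have hin : i * p < n := hblock i hi
    have hlt : i * p < (i + 1) * p := by
      have h3 : (i + 1) * p = i * p + p := by ring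
      omega
    apply IsGreatest.csSup_eq
    constructor
    · exact ⟨i * p, ⟨le_rfl, lt_min hlt hin⟩, rfl⟩
    · rintro x ⟨j, ⟨hj1, hj2⟩, rfl⟩
      exact hmono _ _ hj1 (lt_of_lt_of_le hj2 (min_le_right _ _))
  have hm1 : 1 ≤ m := by
    rw [hm]
    exact (Nat.le_div_iff_mul_le hp0).mpr (by omega)
  have key : ∀ k, k ≤ m - 1 →
      (p : ℝ) * ∑ i ∈ Finset.range k, w ((i + 1) * p)
        ≤ ∑ j ∈ Finset.range (k * p), w j := by
    intro k hk
    induction k with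
    | zero => simp
    | succ k ih =>
      have h1 := ih (by omega)
      have heq : (k + 1) * p = k * p + p := by ring
      have hsum : ∑ j ∈ Finset.range ((k + 1) * p), w j
          = ∑ j ∈ Finset.range (k * p), w j
            + ∑ j ∈ Finset.Ico (k * p) (k * p + p), w j := by
        rw [heq, Finset.range_eq_Ico,
          ← Finset.sum_Ico_consecutive _ (Nat.zero_le (k * p)) (Nat.le_add_right _ _),
          ← Finset.range_eq_Ico]
      have hkn : (k + 1) * p < n := hblock (k + 1) (by omega)
      have hbound : (p : ℝ) * w ((k + 1) * p)
          ≤ ∑ j ∈ Finset.Ico (k * p) (k * p + p), w j := by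
        have hle : ∀ j ∈ Finset.Ico (k * p) (k * p + p), w ((k + 1) * p) ≤ w j := by
          intro j hj
          simp only [Finset.mem_Ico] at hj
          exact hmono j ((k + 1) * p) (by rw [heq]; omega) hkn
        calc (p : ℝ) * w ((k + 1) * p)
            = ∑ _j ∈ Finset.Ico (k * p) (k * p + p), w ((k + 1) * p) := by
              rw [Finset.sum_const, Nat.card_Ico, Nat.add_sub_cancel_left,
                nsmul_eq_mul]
          _ ≤ _ := Finset.sum_le_sum hle
      rw [Finset.sum_range_succ, hsum, mul_add]
      linarith
  have hsum_eq : ∑ i ∈ Finset.range m,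
        (sSup (w '' Set.Ico (i * p) (min ((i + 1) * p) n)) + (lam i : ℝ) - 1)
      = ∑ i ∈ Finset.range m, w (i * p)
        + ∑ i ∈ Finset.range m, ((lam i - 1 : ℕ) : ℝ) := by
    rw [← Finset.sum_add_distrib]
    apply Finset.sum_congr rfl
    intro i hi
    rw [hsup i (Finset.mem_range.mp hi),
      Nat.cast_sub (hlam i (Finset.mem_range.mp hi))]
    push_cast
    ring
  have hlamb : ∑ i ∈ Finset.range m, ((lam i - 1 : ℕ) : ℝ) ≤ (D : ℝ) := by
    rw [← Nat.cast_sum]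
    exact_mod_cast hD
  have hsplit : ∑ i ∈ Finset.range m, w (i * p)
      = w 0 + ∑ i ∈ Finset.range (m - 1), w ((i + 1) * p) := by
    have hm' : m = (m - 1) + 1 := by omega
    rw [hm', Finset.sum_range_succ']
    simp [add_comm]
  have htail : ∑ j ∈ Finset.range ((m - 1) * p), w j
      ≤ ∑ j ∈ Finset.range n, w j := by
    apply Finset.sum_le_sum_of_subset_of_nonneg
    · apply Finset.range_subset_range.mpr
      have := hblock (m - 1) (by omega)
      omega
    · intro j hj _
      exact hnonneg j (Finset.mem_range.mp hj)
  have hmid : ∑ i ∈ Finset.range (m - 1), w ((i + 1) * p)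
      ≤ (∑ j ∈ Finset.range n, w j) / p := by
    rw [le_div_iff₀ (by positivity : (0 : ℝ) < (p : ℝ)), mul_comm]
    exact le_trans (key (m - 1) le_rfl) htail
  rw [hsum_eq, hsplit]
  linarith
end
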